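/- Let Σ ∈ ℝ^{m×m} be a symmetric positive definite matrix with all diagonal entries equal to 1, let β_i ∈ ℝ^{d_i} and let Φ_i ∈ ℝ^{d_i×d_i} be symmetric positive semidefinite for i = 1,…,m. Define the block matrix S with blocks S_{ij} = β_i Σ_{ij} β_jᵀ + δ_{ij} Φ_i, and assume each diagonal block S_{ii} = β_iβ_iᵀ + Φ_i is positive definite with β_iᵀ S_{ii}⁻¹ β_i = 1. Then det(S) = det(Σ) · ∏_{i=1}^m det(S_{ii}). -/

import Mathlib

open Matrix

section aux
variable {m : ℕ} {d : Fin m → ℕ}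

/-- Equivalence between the fiber of the sigma index type over `k` and `Fin (d k)`. -/
def fiberEquiv (d : Fin m → ℕ) (k : Fin m) :
    {a : (i : Fin m) × Fin (d i) // a.1 = k} ≃ Fin (d k) where
  toFun a := Fin.cast (congrArg d a.2) a.1.2
  invFun j := ⟨⟨k, j⟩, rfl⟩
  left_inv := by rintro ⟨⟨i, j⟩, h⟩; subst h; rfl
  right_inv j := rfl

/-- Determinant of a dependent block-diagonal matrix over `Fin`-indexed blocks. -/
lemma det_blockDiagonal'_fin (T : ∀ i, Matrix (Fin (d i)) (Fin (d i)) ℝ) :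
    (blockDiagonal' T).det = ∏ i, (T i).det := by
  have hbt : (blockDiagonal' T).BlockTriangular Sigma.fst := by
    rintro ⟨i, j⟩ ⟨i', j'⟩ h
    exact blockDiagonal'_apply_ne T _ _ (ne_of_lt h).symm
  rw [hbt.det_fintype]
  refine Finset.prod_congr rfl fun k _ => ?_
  rw [← Matrix.det_submatrix_equiv_self (fiberEquiv d k).symm
      ((blockDiagonal' T).toSquareBlock Sigma.fst k)]
  congr 1
  ext j j'
  simp [toSquareBlock, toSquareBlockProp, fiberEquiv]

end aux

/-- Determinant decomposition for the dynamic probabilistic CCA marginal covariance: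
if `S` has blocks `S_{ij} = β_i Σ_{ij} β_jᵀ + δ_{ij} Φ_i`, where `Σ` is symmetric positive
definite with unit diagonal, each `Φ_i` is positive semidefinite, each diagonal block
`S_{ii} = β_iβ_iᵀ + Φ_i` is positive definite and `β_iᵀ S_{ii}⁻¹ β_i = 1`, then
`det S = det Σ · ∏ i det S_{ii}`. -/
theorem stmt6 {m : ℕ} {d : Fin m → ℕ}
    (Sig : Matrix (Fin m) (Fin m) ℝ) (hSig : Sig.PosDef) (hdiag : ∀ i, Sig i i = 1)
    (β : (i : Fin m) → Fin (d i) → ℝ)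
    (Φ : (i : Fin m) → Matrix (Fin (d i)) (Fin (d i)) ℝ)
    (hΦ : ∀ i, (Φ i).PosSemidef)
    (hSii : ∀ i, (vecMulVec (β i) (β i) + Φ i).PosDef)
    (hnorm : ∀ i, β i ⬝ᵥ (vecMulVec (β i) (β i) + Φ i)⁻¹ *ᵥ β i = 1) :
    let S : Matrix ((i : Fin m) × Fin (d i)) ((i : Fin m) × Fin (d i)) ℝ :=
      Matrix.of fun p q =>
        β p.1 p.2 * Sig p.1 q.1 * β q.1 q.2 +
          (if h : p.1 = q.1 then Φ p.1 p.2 (Fin.cast (congrArg d h.symm) q.2) else 0)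
    S.det = Sig.det * ∏ i, (vecMulVec (β i) (β i) + Φ i).det := by
  intro S
  classical
  set T : ∀ i, Matrix (Fin (d i)) (Fin (d i)) ℝ := fun i => vecMulVec (β i) (β i) + Φ i with hT
  set D : Matrix ((i : Fin m) × Fin (d i)) ((i : Fin m) × Fin (d i)) ℝ := blockDiagonal' T with hD
  set E : Matrix ((i : Fin m) × Fin (d i)) ((i : Fin m) × Fin (d i)) ℝ :=
    blockDiagonal' (fun i => (T i)⁻¹) with hE
  set B : Matrix ((i : Fin m) × Fin (d i)) (Fin m) ℝ :=
    Matrix.of (fun p j => if p.1 = j then β p.1 p.2 else 0) with hB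
  have hTdet : ∀ i, IsUnit (T i).det := fun i => (hSii i).det_pos.ne'.isUnit
  have hDE : D * E = 1 := by
    rw [hD, hE, ← blockDiagonal'_mul]
    have h1 : (fun i => T i * (T i)⁻¹) = fun _ => (1 : Matrix (Fin (d _)) (Fin (d _)) ℝ) := by
      funext i; exact mul_nonsing_inv _ (hTdet i)
    rw [h1]
    exact blockDiagonal'_one
  -- S = D + B (Sig - 1) Bᵀ
  have hS : S = D + B * ((Sig - 1) * Bᵀ) := by
    have hmul : ∀ p q : (i : Fin m) × Fin (d i),
        (B * ((Sig - 1) * Bᵀ) : Matrix _ _ ℝ) p q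
          = β p.1 p.2 * (Sig p.1 q.1 - if p.1 = q.1 then 1 else 0) * β q.1 q.2 := by
      intro p q
      simp [mul_apply, hB, Matrix.sub_apply, one_apply, ite_mul, mul_ite, mul_zero, zero_mul,
        Finset.sum_ite_eq, Finset.mul_sum, mul_sub, sub_mul]
      ring
    ext ⟨i, k⟩ ⟨i', k'⟩
    rw [Matrix.add_apply, hmul ⟨i, k⟩ ⟨i', k'⟩]
    by_cases h : i = i'
    · subst h
      simp [S, hD, hT, blockDiagonal'_apply_eq, vecMulVec_apply]
      ring
    · have : D ⟨i, k⟩ ⟨i', k'⟩ = 0 := blockDiagonal'_apply_ne T _ _ h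
      simp [S, this, h]
  -- Bᵀ E B = 1
  have hBEB : (Bᵀ * (E * B) : Matrix (Fin m) (Fin m) ℝ) = 1 := by
    have hEB : ∀ (p : (i : Fin m) × Fin (d i)) (j : Fin m),
        (E * B : Matrix _ _ ℝ) p j
          = if h : p.1 = j then ∑ l, (T j)⁻¹ (Fin.cast (congrArg d h) p.2) l * β j l else 0 := by
      intro p j
      rw [mul_apply, ← Finset.univ_sigma_univ, Finset.sum_sigma]
      rcases p with ⟨a, k⟩
      by_cases h : a = j
      · subst h
        rw [dif_pos rfl]
        rw [Finset.sum_eq_single a]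
        · simp [hE, hB, blockDiagonal'_apply_eq]
        · intro b _ hb
          apply Finset.sum_eq_zero
          intro l _
          have hz : B ⟨b, l⟩ a = 0 := by simp [hB, hb]
          rw [hz, mul_zero]
        · simp
      · rw [dif_neg h]
        apply Finset.sum_eq_zero
        intro b _
        apply Finset.sum_eq_zero
        intro l _
        rcases eq_or_ne a b with rfl | hab
        · simp [hB, h]
        · simp [hE, blockDiagonal'_apply_ne _ _ _ hab]
    ext i j
    rw [mul_apply, ← Finset.univ_sigma_univ, Finset.sum_sigma]
    by_cases h : i = j
    · subst h
      rw [one_apply_eq]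
      rw [Finset.sum_eq_single i]
      · have := hnorm i
        rw [dotProduct] at this
        calc ∑ k, Bᵀ i ⟨i, k⟩ * (E * B : Matrix _ _ ℝ) ⟨i, k⟩ i
            = ∑ k, β i k * ∑ l, (T i)⁻¹ k l * β i l := by
              refine Finset.sum_congr rfl fun k _ => ?_
              rw [hEB ⟨i, k⟩ i, dif_pos rfl]
              simp [hB]
          _ = 1 := by
              rw [← this]
              refine Finset.sum_congr rfl fun k _ => ?_
              congr 1
      · intro b _ hb
        apply Finset.sum_eq_zero
        intro k _
        simp [hB, hb]
      · simp
    · rw [one_apply_ne h]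
      apply Finset.sum_eq_zero
      intro b _
      apply Finset.sum_eq_zero
      intro k _
      rcases eq_or_ne b i with rfl | hbi
      · rw [hEB ⟨b, k⟩ j, dif_neg h, mul_zero]
      · simp [hB, hbi]
  -- main computation
  have hfact : S = D * (1 + E * (B * ((Sig - 1) * Bᵀ))) := by
    rw [mul_add, mul_one, ← mul_assoc, hDE, one_mul, hS]
  rw [hfact, det_mul]
  have h2 : (1 + E * (B * ((Sig - 1) * Bᵀ)) : Matrix _ _ ℝ)
      = 1 + (E * B) * ((Sig - 1) * Bᵀ) := by
    rw [Matrix.mul_assoc E B ((Sig - 1) * Bᵀ)]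
  rw [h2, det_one_add_mul_comm]
  have h3 : ((Sig - 1) * Bᵀ * (E * B) : Matrix (Fin m) (Fin m) ℝ) = Sig - 1 := by
    rw [Matrix.mul_assoc (Sig - 1) Bᵀ (E * B), hBEB, mul_one]
  rw [h3, add_sub_cancel]
  rw [hD, det_blockDiagonal'_fin, mul_comm]
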